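/- Let D be a prefix-free set of nonempty strings over a linearly ordered alphabet, and let α₁, α₂, … and β₁, β₂, … be sequences of elements of D. Then the infinite concatenation α₁α₂⋯ is lexicographically less than β₁β₂⋯ if and only if the sequence (α₁, α₂, …) is lexicographically less than (β₁, β₂, …) where elements of D are compared by the lexicographic order on strings. -/

import Mathlib

/-- `l` is a prefix of the infinite sequence `x`. -/
def SeqIsPrefix {σ : Type*} (l : List σ) (x : ℕ → σ) : Prop :=
  ∀ i, (h : i < l.length) → x i = l.get ⟨i, h⟩

/-- `x` is the infinite concatenation `a 0 ++ a 1 ++ ⋯`. -/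
def IsConcat {σ : Type*} (x : ℕ → σ) (a : ℕ → List σ) : Prop :=
  ∀ n, SeqIsPrefix (((List.range n).map a).flatten) x

/-- Lexicographic order on infinite sequences over an ordered type. -/
def SeqLexLt {τ : Type*} [LT τ] (x y : ℕ → τ) : Prop :=
  ∃ k, (∀ i < k, x i = y i) ∧ x k < y k

section Aux

variable {σ : Type*} [LinearOrder σ]

/-- First-difference analysis of two lists, neither a prefix of the other. -/
lemma firstDiff : ∀ (u v : List σ), ¬ u <+: v → ¬ v <+: u →
    ∃ j, ∃ (h1 : j < u.length) (h2 : j < v.length),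
      (∀ i (hi : i < j), u.get ⟨i, by omega⟩ = v.get ⟨i, by omega⟩) ∧
      (List.Lex (· < ·) u v ↔ u.get ⟨j, h1⟩ < v.get ⟨j, h2⟩)
  | [], v, huv, _ => absurd (List.nil_prefix) huv
  | (x :: u), [], _, hvu => absurd (List.nil_prefix) hvu
  | (x :: u), (y :: v), huv, hvu => by
      by_cases hxy : x = y
      · subst hxy
        have huv' : ¬ u <+: v := fun h => huv (by simpa [List.cons_prefix_cons] using h)
        have hvu' : ¬ v <+: u := fun h => hvu (by simpa [List.cons_prefix_cons] using h)
        obtain ⟨j, h1, h2, heq, hlex⟩ := firstDiff u v huv' hvu'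
        refine ⟨j + 1, by simp only [List.length_cons]; omega,
          by simp only [List.length_cons]; omega, ?_, ?_⟩
        · intro i hi
          cases i with
          | zero => rfl
          | succ i =>
            simp only [List.get_eq_getElem, List.getElem_cons_succ]
            have := heq i (by omega)
            simpa using this
        · rw [List.lex_cons_iff]
          simp only [List.get_eq_getElem, List.getElem_cons_succ]
          simpa using hlex
      · refine ⟨0, by simp, by simp, fun i hi => absurd hi (Nat.not_lt_zero i), ?_⟩
        simp only [List.get_eq_getElem, List.getElem_cons_zero]
        constructor
        · intro h
          cases h with
          | cons h => exact absurd rfl hxy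
          | rel h => exact h
        · exact fun h => List.Lex.rel h
termination_by u => u.length

lemma seqLexLt_asymm {x y : ℕ → σ} (h : SeqLexLt x y) : ¬ SeqLexLt y x := by
  rintro ⟨k₂, he₂, hl₂⟩
  obtain ⟨k₁, he₁, hl₁⟩ := h
  rcases lt_trichotomy k₁ k₂ with h | rfl | h
  · exact absurd (he₂ k₁ h).symm (ne_of_lt hl₁)
  · exact absurd hl₂ (not_lt.2 hl₁.le)
  · exact absurd (he₁ k₂ h) (ne_of_gt hl₂)

lemma length_flatten_ge (a : ℕ → List σ) (hne : ∀ i, a i ≠ []) (n : ℕ) :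
    n ≤ (((List.range n).map a).flatten).length := by
  induction n with
  | zero => simp
  | succ n ih =>
    have h1 : 1 ≤ (a n).length := List.length_pos_iff.2 (hne n)
    have h2 : (((List.range (n+1)).map a).flatten).length
        = (((List.range n).map a).flatten).length + (a n).length := by
      simp [List.range_succ]
    omega

/-- Getting an entry inside the `k`-th block of the concatenation. -/
lemma concat_get_block {S : ℕ → σ} {a : ℕ → List σ} (hS : IsConcat S a)
    (k j : ℕ) (hj : j < (a k).length) :
    S ((((List.range k).map a).flatten).length + j) = (a k).get ⟨j, hj⟩ := by
  have hfl : ((List.range (k+1)).map a).flatten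
      = ((List.range k).map a).flatten ++ a k := by
    simp [List.range_succ]
  have hlen : (((List.range k).map a).flatten).length + j
      < (((List.range (k+1)).map a).flatten).length := by
    rw [hfl, List.length_append]; omega
  rw [hS (k+1) _ hlen]
  simp only [List.get_eq_getElem]
  rw [List.getElem_of_eq hfl, List.getElem_append_right (by omega)]
  congr 1
  omega

/-- The one-directional main lemma. -/
lemma forward_dir {D : Set (List σ)}
    (hpf : ∀ α ∈ D, ∀ β ∈ D, α ≠ β → ¬ α <+: β)
    (S₁ S₂ : ℕ → σ) (a b : ℕ → List σ)
    (ha : ∀ i, a i ∈ D) (hb : ∀ i, b i ∈ D)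
    (hSa : IsConcat S₁ a) (hSb : IsConcat S₂ b)
    (h : ∃ k, (∀ i < k, a i = b i) ∧ List.Lex (· < ·) (a k) (b k)) :
    SeqLexLt S₁ S₂ := by
  obtain ⟨k, heq, hlex⟩ := h
  have hFeq : ((List.range k).map a).flatten = ((List.range k).map b).flatten := by
    congr 1
    exact List.map_congr_left (fun i hi => heq i (List.mem_range.1 hi))
  have hLeq : (((List.range k).map a).flatten).length
      = (((List.range k).map b).flatten).length := by rw [hFeq]
  set L := (((List.range k).map a).flatten).length with hL
  have hne' : a k ≠ b k := by
    rintro hEq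
    rw [hEq] at hlex
    exact (List.Lex.asymm (· < ·)).asymm _ _ hlex hlex
  obtain ⟨j, h1, h2, hpre, hiff⟩ := firstDiff (a k) (b k)
    (hpf _ (ha k) _ (hb k) hne') (hpf _ (hb k) _ (ha k) (Ne.symm hne'))
  have hlt := hiff.1 hlex
  have key₁ : ∀ j' (hj' : j' < (a k).length), S₁ (L + j') = (a k).get ⟨j', hj'⟩ :=
    fun j' hj' => concat_get_block hSa k j' hj'
  have key₂ : ∀ j' (hj' : j' < (b k).length), S₂ (L + j') = (b k).get ⟨j', hj'⟩ := by
    intro j' hj'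
    have h' := concat_get_block hSb k j' hj'
    rw [← hLeq] at h'
    exact h'
  have agree : ∀ m < L, S₁ m = S₂ m := by
    intro m hm
    rw [hSa k m hm, hSb k m (by omega)]
    simp only [List.get_eq_getElem]
    exact List.getElem_of_eq hFeq hm
  refine ⟨L + j, ?_, ?_⟩
  · intro i hi
    by_cases him : i < L
    · exact agree i him
    · have hi' : i = L + (i - L) := by omega
      rw [hi', key₁ (i - L) (by omega), key₂ (i - L) (by omega)]
      exact hpre (i - L) (by omega)
  · rw [key₁ j h1, key₂ j h2]
    exact hlt

end Aux

/-- with a prefix-free dictionary, the infinite concatenation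
`α₁α₂⋯` is lexicographically less than `β₁β₂⋯` iff the phrase sequences compare
the same way (phrases compared by the lexicographic order on strings). -/
theorem stmt_3 {σ : Type*} [LinearOrder σ] (D : Set (List σ))
    (hne : ∀ α ∈ D, α ≠ [])
    (hpf : ∀ α ∈ D, ∀ β ∈ D, α ≠ β → ¬ α <+: β)
    (S₁ S₂ : ℕ → σ) (a b : ℕ → List σ)
    (ha : ∀ i, a i ∈ D) (hb : ∀ i, b i ∈ D)
    (hSa : IsConcat S₁ a) (hSb : IsConcat S₂ b) :
    SeqLexLt S₁ S₂ ↔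
      (∃ k, (∀ i < k, a i = b i) ∧ List.Lex (· < ·) (a k) (b k)) := by
  constructor
  · intro hS
    by_contra hR
    push_neg at hR
    by_cases hall : ∀ i, a i = b i
    · have : S₁ = S₂ := by
        funext m
        have hmap : ((List.range (m+1)).map a) = ((List.range (m+1)).map b) :=
          List.map_congr_left (fun i _ => hall i)
        have hm : m < (((List.range (m+1)).map a).flatten).length :=
          lt_of_lt_of_le (Nat.lt_succ_self m)
            (length_flatten_ge a (fun i => hne _ (ha i)) (m+1))
        rw [hSa (m+1) m hm, hSb (m+1) m (by rw [← hmap]; exact hm)]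
        simp only [List.get_eq_getElem]
        exact List.getElem_of_eq (by rw [hmap]) hm
      obtain ⟨k, _, hk⟩ := hS
      rw [this] at hk
      exact lt_irrefl _ hk
    · push_neg at hall
      classical
      set k := Nat.find hall with hk
      have hkne : a k ≠ b k := Nat.find_spec hall
      have hkmin : ∀ i < k, a i = b i := by
        intro i hi
        by_contra hcon
        exact absurd hi (not_lt.2 (Nat.find_le hcon))
      have hnlex : ¬ List.Lex (· < ·) (a k) (b k) := hR k hkmin
      have hlex' : List.Lex (· < ·) (b k) (a k) := by
        rcases trichotomous_of (List.Lex (· < ·)) (a k) (b k) with h | h | h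
        · exact absurd h hnlex
        · exact absurd h hkne
        · exact h
      exact seqLexLt_asymm hS
        (forward_dir hpf S₂ S₁ b a hb ha hSb hSa ⟨k, fun i hi => (hkmin i hi).symm, hlex'⟩)
  · exact forward_dir hpf S₁ S₂ a b ha hb hSa hSb
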